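/- For a Dyck path P of size n+1 with all peaks at odd height, area(P) is even if and only if the associated Motzkin path φ_A(P) has an even number of up steps. -/

import Mathlib

/-- A Dyck path of size `n`: a list of booleans (`true` = north step, `false` = east step)
from `(0,0)` to `(n,n)` staying weakly above the diagonal `y = x`. -/
def IsDyckPath (n : ℕ) (w : List Bool) : Prop :=
  w.length = 2 * n ∧ w.count true = n ∧
    ∀ k, (w.take k).count false ≤ (w.take k).count true

/-- The `y`-coordinate of the lattice point reached after `k` steps. -/
def ycoord (w : List Bool) (k : ℕ) : ℕ := (w.take k).count true

/-- The `x`-coordinate of the lattice point reached after `k` steps. -/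
def xcoord (w : List Bool) (k : ℕ) : ℕ := (w.take k).count false

/-- A peak: a north step at position `i` followed by an east step. -/
def IsPeak (w : List Bool) (i : ℕ) : Prop := w[i]? = some true ∧ w[i+1]? = some false

/-- A valley: an east step at position `i` followed by a north step. -/
def IsValley (w : List Bool) (i : ℕ) : Prop := w[i]? = some false ∧ w[i+1]? = some true

/-- Height above the diagonal after `k` steps. -/
def pdepth (w : List Bool) (k : ℕ) : ℤ := (ycoord w k : ℤ) - (xcoord w k : ℤ)

/-- Step `i` (a north step) of `w` is matched with step `j` (an east step):
the facing east step at the same height (balanced-parentheses matching). -/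
def Matches (w : List Bool) (i j : ℕ) : Prop :=
  i < j ∧ w[i]? = some true ∧ w[j]? = some false ∧
    pdepth w (j + 1) = pdepth w i ∧ ∀ k, i < k → k ≤ j → pdepth w i < pdepth w k

/-- The graph on `m` points whose edges are the upper arches and the lower arches;
its connected components are the components of the corresponding meander. -/
def meanderGraph (m : ℕ) (upper lower : ℕ → ℕ → Prop) : SimpleGraph (Fin m) where
  Adj i j := i ≠ j ∧ (upper i.1 j.1 ∨ upper j.1 i.1 ∨ lower i.1 j.1 ∨ lower j.1 i.1)
  symm := by
    constructor
    intro i j h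
    exact ⟨h.1.symm, by tauto⟩
  loopless := by
    constructor
    intro i h
    exact h.1 rfl

/-- The number of components of the meander with the matching of `P` above and the
matching of `Q` below. -/
noncomputable def trajPQ (n : ℕ) (P Q : List Bool) : ℕ :=
  Nat.card (meanderGraph (2 * n) (Matches P) (Matches Q)).ConnectedComponent

/-- The number of components of the meander with the matching of `P` above and the
rainbow matching `i ↦ 2n - 1 - i` below. -/
noncomputable def traj (n : ℕ) (P : List Bool) : ℕ :=
  Nat.card (meanderGraph (2 * n) (Matches P)
    (fun i j => i + j + 1 = 2 * n)).ConnectedComponent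

/-- No peak with even `y`-coordinate and no valley with odd `x`-coordinate. -/
def NoBadCorner (w : List Bool) : Prop :=
  (∀ i, IsPeak w i → Odd (ycoord w (i + 1))) ∧
  (∀ i, IsValley w i → Even (xcoord w (i + 1)))

/-- A bad corner: a peak with even `y`-coordinate or a valley with odd `x`-coordinate. -/
def IsBadCorner (w : List Bool) (i : ℕ) : Prop :=
  (IsPeak w i ∧ Even (ycoord w (i + 1))) ∨ (IsValley w i ∧ Odd (xcoord w (i + 1)))

/-- Interchange the two steps of the corner at positions `i`, `i+1`. -/
def swapCorner (w : List Bool) (i : ℕ) : List Bool :=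
  (w.set i (w.getD (i + 1) true)).set (i + 1) (w.getD i true)

open Classical in
/-- The involution `φ`: swap the two steps of the first bad corner, if any. -/
noncomputable def phiMap (w : List Bool) : List Bool :=
  if h : ∃ i, IsBadCorner w i then swapCorner w (Nat.find h) else w

/-- The number of unit squares between a Dyck path and the diagonal `y = x`. -/
def area (w : List Bool) : ℕ :=
  ((List.range w.length).map fun i =>
    if w.getD i true then 0 else ycoord w i - xcoord w i - 1).sum

/-- The zigzag Dyck path `(NE)^m`. -/
def zigzag (m : ℕ) : List Bool := (List.replicate m [true, false]).flatten

/-- `N^{2a_1} E^{2b_1} ⋯ N^{2a_t} E^{2b_t}` for `ab = [(a_1,b_1),…,(a_t,b_t)]`. -/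
def doubledWord (ab : List (ℕ × ℕ)) : List Bool :=
  (ab.map fun p => List.replicate (2 * p.1) true ++ List.replicate (2 * p.2) false).flatten

/-- `N^{a_1} E^{b_1} ⋯ N^{a_t} E^{b_t}` for `ab = [(a_1,b_1),…,(a_t,b_t)]`. -/
def halfWord (ab : List (ℕ × ℕ)) : List Bool :=
  (ab.map fun p => List.replicate p.1 true ++ List.replicate p.2 false).flatten

/-- All peaks at odd height (`height` = `y - x` at the peak's lattice point). -/
def AllPeaksOdd (w : List Bool) : Prop :=
  ∀ i, IsPeak w i → Odd (ycoord w (i + 1) - xcoord w (i + 1))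

/-- All peaks at even height. -/
def AllPeaksEven (w : List Bool) : Prop :=
  ∀ i, IsPeak w i → Even (ycoord w (i + 1) - xcoord w (i + 1))

/-- Steps of a Motzkin path: up, horizontal, down. -/
inductive MStep | U | H | D
deriving DecidableEq

/-- The total height change along a list of Motzkin steps. -/
def msum (l : List MStep) : ℤ :=
  (l.map fun s => match s with | MStep.U => 1 | MStep.H => 0 | MStep.D => -1).sum

/-- A Motzkin path of length `n`. -/
def IsMotzkin (n : ℕ) (l : List MStep) : Prop :=
  l.length = n ∧ msum l = 0 ∧ ∀ k, 0 ≤ msum (l.take k)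

/-- A Riordan path of length `n`: a Motzkin path with no horizontal step on the `x`-axis. -/
def IsRiordan (n : ℕ) (l : List MStep) : Prop :=
  IsMotzkin n l ∧ ∀ i, l[i]? = some MStep.H → msum (l.take i) ≠ 0

/-- The map `φ_A` from Dyck paths of size `n+1` (all peaks at odd height)
to Motzkin paths of length `n`: `v_j` is read off from steps `p_{2j} p_{2j+1}`. -/
def phiA (n : ℕ) (P : List Bool) : List MStep :=
  (List.range n).map fun j =>
    match P.getD (2 * j + 1) true, P.getD (2 * j + 2) true with
    | true, true => MStep.U
    | false, true => MStep.H
    | _, _ => MStep.D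

/-- The map `φ_B` from Dyck paths of size `n` (all peaks at even height)
to Riordan paths of length `n`: `u_j` is read off from steps `p_{2j-1} p_{2j}`. -/
def phiB (n : ℕ) (P : List Bool) : List MStep :=
  (List.range n).map fun j =>
    match P.getD (2 * j) true, P.getD (2 * j + 1) true with
    | true, true => MStep.U
    | false, true => MStep.H
    | _, _ => MStep.D

lemma map_range_sum {M : Type*} [AddCommMonoid M] (f : ℕ → M) (m : ℕ) :
    ((List.range m).map f).sum = ∑ i ∈ Finset.range m, f i := by
  induction m with
  | zero => simp
  | succ k ih =>
      rw [List.range_succ, List.map_append, List.sum_append, Finset.sum_range_succ, ih]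
      simp

lemma sum_pairs {M : Type*} [AddCommMonoid M] (n : ℕ) (g : ℕ → M) :
    ∑ i ∈ Finset.range (2*n+2), g i
      = g 0 + g (2*n+1) + ∑ j ∈ Finset.range n, (g (2*j+1) + g (2*j+2)) := by
  induction n with
  | zero => simp [Finset.sum_range_succ]
  | succ m ih =>
      have h1 : 2*(m+1)+2 = (2*m+2)+1+1 := by ring
      rw [h1, Finset.sum_range_succ, Finset.sum_range_succ, ih, Finset.sum_range_succ]
      have h2 : 2*(m+1)+1 = 2*m+2+1 := by ring
      have h3 : 2*m+1+1 = 2*m+2 := by ring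
      rw [h2, h3]
      abel

lemma count_tf (l : List Bool) : l.count true + l.count false = l.length := by
  induction l with
  | nil => simp
  | cons x t ih => cases x <;> simp [List.count_cons] <;> omega

lemma sum_getD_count (l : List Bool) :
    ∑ i ∈ Finset.range l.length, (if l.getD i true then 1 else 0) = l.count true := by
  induction l with
  | nil => simp
  | cons x t ih =>
      rw [List.length_cons, Finset.sum_range_succ']
      simp only [List.getD_cons_succ, List.getD_cons_zero, ih, List.count_cons]
      cases x <;> simp

lemma count_map_range (n : ℕ) (f : ℕ → MStep) (a : MStep) :
    ((List.range n).map f).count a = ∑ j ∈ Finset.range n, if f j = a then 1 else 0 := by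
  induction n with
  | zero => simp
  | succ m ih =>
      rw [List.range_succ, List.map_append, List.count_append, ih, Finset.sum_range_succ]
      simp [List.count_singleton', eq_comm]

/-- For a Dyck path `P` of size `n+1` with all peaks at odd height, `area(P)` is even iff
the Motzkin path `φ_A(P)` has an even number of up steps. -/
theorem area_parity_phiA (n : ℕ) (P : List Bool) (hP : IsDyckPath (n + 1) P)
    (h : AllPeaksOdd P) :
    (Even (area P) ↔ Even ((phiA n P).count MStep.U)) := by
  obtain ⟨hlen, hcnt, hdyck⟩ := hP
  have two : (2 : ZMod 2) = 0 := rfl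
  have hL : P.length = 2*n+2 := by omega
  have hyx : ∀ i, i ≤ 2*n+2 → ycoord P i + xcoord P i = i := by
    intro i hi
    have h1 := count_tf (P.take i)
    rw [List.length_take, hL] at h1
    unfold ycoord xcoord
    omega
  have hle : ∀ i, xcoord P i ≤ ycoord P i := fun i => hdyck i
  have hgetD : ∀ i, i < 2*n+2 → P[i]? = some (P.getD i true) := by
    intro i hi
    have hi' : i < P.length := by omega
    rw [List.getD_eq_getElem P true hi', List.getElem?_eq_getElem hi']
  have hstep : ∀ i, i < 2*n+2 → P.take (i+1) = P.take i ++ [P.getD i true] := by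
    intro i hi
    rw [List.take_succ, hgetD i hi]
    rfl
  have hyc : ∀ i, i < 2*n+2 →
      ycoord P (i+1) = ycoord P i + (if P.getD i true then 1 else 0) := by
    intro i hi
    unfold ycoord
    rw [hstep i hi, List.count_append]
    cases hb : P.getD i true <;> simp
  have hxc : ∀ i, i < 2*n+2 →
      xcoord P (i+1) = xcoord P i + (if P.getD i true then 0 else 1) := by
    intro i hi
    unfold xcoord
    rw [hstep i hi, List.count_append]
    cases hb : P.getD i true <;> simp
  have heast : ∀ i, i < 2*n+2 → P.getD i true = false →
      xcoord P i + 1 ≤ ycoord P i := by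
    intro i hi hf
    have h1 := hle (i+1)
    rw [hyc i hi, hxc i hi, hf] at h1
    simpa using h1
  have h0 : P.getD 0 true = true := by
    by_contra hc
    have hc' : P.getD 0 true = false := by simpa using hc
    have := heast 0 (by omega) hc'
    unfold ycoord xcoord at this
    simp at this
  have hlast : P.getD (2*n+1) true = false := by
    by_contra hc
    have hc' : P.getD (2*n+1) true = true := by simpa using hc
    have h1 := hyc (2*n+1) (by omega)
    rw [hc'] at h1
    have h1' : ycoord P (2*n+2) = ycoord P (2*n+1) + 1 := by simpa using h1
    have h2 : ycoord P (2*n+2) = n+1 := by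
      unfold ycoord
      rw [List.take_of_length_le (by omega)]
      exact hcnt
    have h3 := hyx (2*n+1) (by omega)
    have h4 := hle (2*n+1)
    omega
  have hpk : ∀ j, j < n → P.getD (2*j+1) true = true → P.getD (2*j+2) true = true := by
    intro j hj
    by_contra hc
    push_neg at hc
    obtain ⟨hb1, hb2⟩ := hc
    have hb2' : P.getD (2*j+2) true = false := by simpa using hb2
    have hpeak : IsPeak P (2*j+1) := by
      constructor
      · rw [hgetD (2*j+1) (by omega), hb1]
      · rw [show 2*j+1+1 = 2*j+2 from rfl, hgetD (2*j+2) (by omega), hb2']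
    have hodd := h (2*j+1) hpeak
    rw [show 2*j+1+1 = 2*j+2 from rfl] at hodd
    obtain ⟨k, hk⟩ := hodd
    have h1 := hyx (2*j+2) (by omega)
    have h2 := hle (2*j+2)
    omega
  have harea : (area P : ZMod 2)
      = ∑ i ∈ Finset.range (2*n+2),
          ((if P.getD i true then 0 else ycoord P i - xcoord P i - 1 : ℕ) : ZMod 2) := by
    unfold area
    rw [hL, map_range_sum]
    push_cast
    rfl
  have geast : ∀ i, i < 2*n+2 → P.getD i true = false →
      ((ycoord P i - xcoord P i - 1 : ℕ) : ZMod 2) = ((i+1 : ℕ) : ZMod 2) := by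
    intro i hi hf
    have h1 := heast i hi hf
    have h2 := hyx i (le_of_lt hi)
    have h2' : ((ycoord P i : ZMod 2) + (xcoord P i : ZMod 2)) = ((i : ℕ) : ZMod 2) := by
      exact_mod_cast congrArg (fun m : ℕ => (m : ZMod 2)) h2
    rw [Nat.sub_sub, Nat.cast_sub (by omega)]
    push_cast
    linear_combination h2' - ((xcoord P i : ZMod 2) + 1) * two
  have harea2 : (area P : ZMod 2)
      = ∑ j ∈ Finset.range n, ((if P.getD (2*j+2) true then 0 else 1 : ℕ) : ZMod 2) := by
    rw [harea, sum_pairs, h0, hlast]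
    simp only [Bool.false_eq_true, if_false, if_true]
    rw [geast (2*n+1) (by omega) hlast]
    have hz : ((2*n+1+1 : ℕ) : ZMod 2) = 0 := by
      push_cast
      linear_combination ((n : ZMod 2) + 1) * two
    rw [hz]
    simp only [Nat.cast_zero, zero_add, add_zero]
    apply Finset.sum_congr rfl
    intro j hj
    have hjn : j < n := Finset.mem_range.mp hj
    cases hb1 : P.getD (2*j+1) true
    · cases hb2 : P.getD (2*j+2) true
      · simp only [Bool.false_eq_true, if_false]
        rw [geast (2*j+1) (by omega) hb1, geast (2*j+2) (by omega) hb2]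
        push_cast
        linear_combination (2*(j : ZMod 2) + 2) * two
      · simp only [Bool.false_eq_true, if_false, if_true]
        rw [geast (2*j+1) (by omega) hb1]
        push_cast
        linear_combination ((j : ZMod 2) + 1) * two
    · have hb2 := hpk j hjn hb1
      rw [hb2]
      simp
  set f : ℕ → MStep := fun j =>
    match P.getD (2 * j + 1) true, P.getD (2 * j + 2) true with
    | true, true => MStep.U
    | false, true => MStep.H
    | _, _ => MStep.D with hf
  have hcount : (phiA n P).count MStep.U
      = ∑ j ∈ Finset.range n, if f j = MStep.U then 1 else 0 := by
    unfold phiA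
    exact count_map_range n f MStep.U
  have htot : ∑ i ∈ Finset.range (2*n+2), (if P.getD i true then 1 else 0) = n+1 := by
    have := sum_getD_count P
    rw [hL] at this
    rw [this, hcnt]
  have hpairsum : ∑ j ∈ Finset.range n,
      ((if P.getD (2*j+1) true then 1 else 0) + (if P.getD (2*j+2) true then 1 else 0)) = n := by
    have hs := sum_pairs (n := n) (g := fun i => if P.getD i true then (1:ℕ) else 0)
    simp only [h0, hlast, Bool.false_eq_true, if_false, if_true] at hs
    rw [htot] at hs
    omega
  have hkey : ∑ j ∈ Finset.range n, (if P.getD (2*j+2) true then (0:ℕ) else 1)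
      = ∑ j ∈ Finset.range n, (if f j = MStep.U then (1:ℕ) else 0) := by
    have hper : ∀ j ∈ Finset.range n,
        (if P.getD (2*j+1) true then (1:ℕ) else 0) + (if P.getD (2*j+2) true then (1:ℕ) else 0)
          + (if P.getD (2*j+2) true then (0:ℕ) else 1)
        = 1 + (if f j = MStep.U then (1:ℕ) else 0) := by
      intro j hj
      have hjn : j < n := Finset.mem_range.mp hj
      cases hb1 : P.getD (2*j+1) true
      · have hb1' : P[2*j+1]?.getD true = false := by
          rw [hgetD (2*j+1) (by omega), Option.getD_some]; exact hb1
        cases hb2 : P.getD (2*j+2) true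
        · have hb2' : P[2*j+2]?.getD true = false := by
            rw [hgetD (2*j+2) (by omega), Option.getD_some]; exact hb2
          simp [hf, hb1, hb2, hb1', hb2']
        · have hb2' : P[2*j+2]?.getD true = true := by
            rw [hgetD (2*j+2) (by omega), Option.getD_some]; exact hb2
          simp [hf, hb1, hb2, hb1', hb2']
      · have hb2 := hpk j hjn hb1
        have hb1' : P[2*j+1]?.getD true = true := by
          rw [hgetD (2*j+1) (by omega), Option.getD_some]; exact hb1
        have hb2' : P[2*j+2]?.getD true = true := by
          rw [hgetD (2*j+2) (by omega), Option.getD_some]; exact hb2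
        simp [hf, hb1, hb2, hb1', hb2']
    have hsum : ∑ j ∈ Finset.range n,
        ((if P.getD (2*j+1) true then (1:ℕ) else 0) + (if P.getD (2*j+2) true then (1:ℕ) else 0)
          + (if P.getD (2*j+2) true then (0:ℕ) else 1))
        = ∑ j ∈ Finset.range n, (1 + (if f j = MStep.U then (1:ℕ) else 0)) :=
      Finset.sum_congr rfl hper
    rw [Finset.sum_add_distrib] at hsum
    rw [hpairsum] at hsum
    rw [Finset.sum_add_distrib] at hsum
    simp only [Finset.sum_const, Finset.card_range, smul_eq_mul, mul_one] at hsum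
    omega
  have hfinal : (area P : ZMod 2) = ((phiA n P).count MStep.U : ZMod 2) := by
    rw [harea2, hcount]
    have h' := congrArg (fun m : ℕ => (m : ZMod 2)) hkey
    push_cast at h' ⊢
    exact h'
  have hmod : area P % 2 = (phiA n P).count MStep.U % 2 :=
    (ZMod.natCast_eq_natCast_iff _ _ _).mp hfinal
  rw [Nat.even_iff, Nat.even_iff, hmod]
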